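/- (Stromquist–Woodall) Let u_i and u_j be two non-atomic, countably additive valuations on the Borel subsets of [0,1), and let H ⊆ [0,1) be a Borel set with u_i(H) > 0 and u_j(H) > 0. Then for every α ∈ [0,1] there exists a Borel set H' ⊆ H such that u_i(H') = α·u_i(H) and u_j(H') = α·u_j(H). -/

import Mathlib

open MeasureTheory Set Filter Topology
open scoped ENNReal

namespace SWaux

lemma small_interval (μ : Measure ℝ) [IsFiniteMeasure μ] (hμ : ∀ x : ℝ, μ {x} = 0)
    (x : ℝ) {ε : ℝ} (hε : 0 < ε) :
    ∃ δ > (0:ℝ), (μ (Set.Ioo (x - δ) (x + δ))).toReal < ε := by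
  have hanti : Antitone (fun n : ℕ => Set.Ioo (x - 1/(n+1)) (x + 1/(n+1))) := by
    intro n m hnm
    have h1 : (1:ℝ)/(m+1) ≤ 1/(n+1) := by
      apply one_div_le_one_div_of_le <;> [positivity; exact_mod_cast by omega]
    exact Set.Ioo_subset_Ioo (by linarith) (by linarith)
  have h := tendsto_measure_iInter_atTop (μ := μ)
    (fun n => measurableSet_Ioo.nullMeasurableSet) hanti ⟨0, measure_ne_top μ _⟩
  have hint : (⋂ n : ℕ, Set.Ioo (x - 1/(n+1)) (x + 1/(n+1))) = {x} := by
    ext y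
    simp only [Set.mem_iInter, Set.mem_Ioo, Set.mem_singleton_iff]
    constructor
    · intro hy
      by_contra hne
      have habs : 0 < |y - x| := by
        rw [abs_pos]; intro h0; exact hne (by linarith [sub_eq_zero.mp h0])
      obtain ⟨n, hn⟩ := exists_nat_one_div_lt habs
      have := hy n
      have : |y - x| < 1/(n+1) := abs_sub_lt_iff.mpr ⟨by linarith [this.2], by linarith [this.1]⟩
      linarith
    · rintro rfl
      intro n
      have : (0:ℝ) < 1/(n+1) := by positivity
      constructor <;> linarith
  rw [hint, hμ x] at h
  have h2 : Tendsto (fun n : ℕ => (μ (Set.Ioo (x - 1/(n+1)) (x + 1/(n+1)))).toReal)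
      atTop (𝓝 0) := by
    simpa [Function.comp_def] using (ENNReal.tendsto_toReal (by simp)).comp h
  have := (h2.eventually (eventually_lt_nhds hε)).exists
  obtain ⟨n, hn⟩ := this
  exact ⟨1/(n+1), by positivity, hn⟩

lemma meas_split (μ : Measure ℝ) (A : Set ℝ) (hA : MeasurableSet A)
    {c d : ℝ} (h : c ≤ d) :
    μ (A ∩ Set.Iio c) + μ (A ∩ Set.Ico c d) = μ (A ∩ Set.Iio d) := by
  rw [← measure_union ?_ (hA.inter measurableSet_Ico)]
  · rw [← Set.inter_union_distrib_left, Set.Iio_union_Ico_eq_Iio h]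
  · exact Set.disjoint_left.mpr (fun z hz hz' => absurd hz.2 (not_lt.mpr hz'.2.1))

lemma meas_split_real (μ : Measure ℝ) [IsFiniteMeasure μ] (A : Set ℝ) (hA : MeasurableSet A)
    {c d : ℝ} (h : c ≤ d) :
    (μ (A ∩ Set.Ico c d)).toReal
      = (μ (A ∩ Set.Iio d)).toReal - (μ (A ∩ Set.Iio c)).toReal := by
  rw [← meas_split μ A hA h, ENNReal.toReal_add (measure_ne_top μ _) (measure_ne_top μ _)]
  ring

lemma cdf_mono (μ : Measure ℝ) [IsFiniteMeasure μ] (A : Set ℝ) :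
    Monotone fun y => (μ (A ∩ Set.Iio y)).toReal := by
  intro c d h
  exact ENNReal.toReal_mono (measure_ne_top μ _)
    (measure_mono (Set.inter_subset_inter_right _ (Set.Iio_subset_Iio h)))

lemma cdf_cont (μ : Measure ℝ) [IsFiniteMeasure μ] (hμ : ∀ x : ℝ, μ {x} = 0)
    (A : Set ℝ) (hA : MeasurableSet A) :
    Continuous fun y => (μ (A ∩ Set.Iio y)).toReal := by
  rw [continuous_iff_continuousAt]
  intro x
  rw [Metric.continuousAt_iff]
  intro ε hε
  obtain ⟨δ, hδ, hsmall⟩ := small_interval μ hμ x hε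
  refine ⟨δ, hδ, fun {y} hy => ?_⟩
  rw [Real.dist_eq] at hy ⊢
  have key : ∀ c d : ℝ, c ≤ d → x - δ < c → d < x + δ →
      (μ (A ∩ Set.Iio d)).toReal - (μ (A ∩ Set.Iio c)).toReal < ε := by
    intro c d hcd h1 h2
    rw [← meas_split_real μ A hA hcd]
    refine lt_of_le_of_lt ?_ hsmall
    refine ENNReal.toReal_mono (measure_ne_top μ _) (measure_mono ?_)
    intro z hz
    exact ⟨lt_of_lt_of_le h1 hz.2.1, hz.2.2.trans h2⟩
  rcases le_total x y with hxy | hxy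
  · have h1 : (μ (A ∩ Set.Iio x)).toReal ≤ (μ (A ∩ Set.Iio y)).toReal := cdf_mono μ A hxy
    rw [abs_of_nonneg (by linarith)]
    have h2 := abs_lt.mp hy
    exact key x y hxy (by linarith) (by linarith)
  · have h1 : (μ (A ∩ Set.Iio y)).toReal ≤ (μ (A ∩ Set.Iio x)).toReal := cdf_mono μ A hxy
    rw [abs_of_nonpos (by linarith)]
    have h2 := abs_lt.mp hy
    have := key y x hxy (by linarith) (by linarith)
    linarith


lemma exists_subset_of_le (μ : Measure ℝ) [IsFiniteMeasure μ] (hμ : ∀ x : ℝ, μ {x} = 0)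
    (A : Set ℝ) (hA : MeasurableSet A) (hAsub : A ⊆ Set.Ico (0:ℝ) 1)
    {c : ℝ} (hc0 : 0 ≤ c) (hc1 : c ≤ (μ A).toReal) :
    ∃ T, T ⊆ A ∧ MeasurableSet T ∧ (μ T).toReal = c := by
  have hcont : ContinuousOn (fun y => (μ (A ∩ Set.Iio y)).toReal) (Set.Icc 0 1) :=
    (cdf_cont μ hμ A hA).continuousOn
  have h0 : A ∩ Set.Iio (0:ℝ) = ∅ := by
    ext z; simp only [Set.mem_inter_iff, Set.mem_Iio, Set.mem_empty_iff_false, iff_false]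
    rintro ⟨hz, hz'⟩; exact absurd (hAsub hz).1 (not_le.mpr hz')
  have h1 : A ∩ Set.Iio (1:ℝ) = A := Set.inter_eq_left.mpr (fun z hz => (hAsub hz).2)
  have hmem : c ∈ Set.Icc ((μ (A ∩ Set.Iio (0:ℝ))).toReal) ((μ (A ∩ Set.Iio (1:ℝ))).toReal) := by
    rw [h0, h1]; simpa using ⟨hc0, hc1⟩
  obtain ⟨x, _, hfx⟩ := intermediate_value_Icc (zero_le_one) hcont hmem
  exact ⟨A ∩ Set.Iio x, Set.inter_subset_left, hA.inter measurableSet_Iio, hfx⟩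

lemma fill_in (ui uj : Measure ℝ) [IsFiniteMeasure ui] [IsFiniteMeasure uj]
    (huj : ∀ x : ℝ, uj {x} = 0)
    (C D : Set ℝ) (hCm : MeasurableSet C) (hDm : MeasurableSet D)
    (hCD : C ⊆ D) (hDsub : D ⊆ Set.Ico (0:ℝ) 1)
    {b : ℝ} (hb1 : (uj C).toReal ≤ b) (hb2 : b ≤ (uj D).toReal)
    (hieq : (ui C).toReal = (ui D).toReal) :
    ∃ S, S ⊆ D ∧ MeasurableSet S ∧ (ui S).toReal = (ui C).toReal ∧ (uj S).toReal = b := by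
  have hEm : MeasurableSet (D \ C) := hDm.diff hCm
  have hEsub : D \ C ⊆ Set.Ico (0:ℝ) 1 := fun z hz => hDsub hz.1
  have hEval : (uj (D \ C)).toReal = (uj D).toReal - (uj C).toReal := by
    rw [measure_diff hCD hCm.nullMeasurableSet (measure_ne_top uj C),
      ENNReal.toReal_sub_of_le (measure_mono hCD) (measure_ne_top uj D)]
  obtain ⟨T, hTE, hTm, hTval⟩ := exists_subset_of_le uj huj (D \ C) hEm hEsub
    (c := b - (uj C).toReal) (by linarith) (by rw [hEval]; linarith)
  have hsub2 : C ∪ T ⊆ D := Set.union_subset hCD (hTE.trans Set.diff_subset)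
  refine ⟨C ∪ T, hsub2, hCm.union hTm, ?_, ?_⟩
  · have m1 : (ui C).toReal ≤ (ui (C ∪ T)).toReal :=
      ENNReal.toReal_mono (measure_ne_top _ _) (measure_mono Set.subset_union_left)
    have m2 : (ui (C ∪ T)).toReal ≤ (ui D).toReal :=
      ENNReal.toReal_mono (measure_ne_top _ _) (measure_mono hsub2)
    linarith
  · have hdisj : Disjoint C T := Set.disjoint_left.mpr (fun z hz hz' => (hTE hz').2 hz)
    rw [measure_union hdisj hTm,
      ENNReal.toReal_add (measure_ne_top _ _) (measure_ne_top _ _), hTval]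
    ring

variable (F : ℝ → ℝ)

/-- lower quantile function -/
noncomputable def xq (s : ℝ) : ℝ := sInf ({x ∈ Set.Icc (0:ℝ) 1 | s ≤ F x} ∪ {1})

/-- upper quantile function -/
noncomputable def xQ (s : ℝ) : ℝ := sSup ({x ∈ Set.Icc (0:ℝ) 1 | F x ≤ s} ∪ {0})

variable {F}

section quantile

variable (hFc : Continuous F) (hFm : Monotone F) (hF0 : F 0 = 0) (hFnn : ∀ x, 0 ≤ F x)

lemma Kq_subset (s : ℝ) : ({x ∈ Set.Icc (0:ℝ) 1 | s ≤ F x} ∪ {1}) ⊆ Set.Icc 0 1 := by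
  rintro x (⟨hx, _⟩ | hx)
  · exact hx
  · simp only [Set.mem_singleton_iff] at hx; subst hx; exact ⟨zero_le_one, le_rfl⟩

lemma KQ_subset (s : ℝ) : ({x ∈ Set.Icc (0:ℝ) 1 | F x ≤ s} ∪ {0}) ⊆ Set.Icc 0 1 := by
  rintro x (⟨hx, _⟩ | hx)
  · exact hx
  · simp only [Set.mem_singleton_iff] at hx; subst hx; exact ⟨le_rfl, zero_le_one⟩

include hFc in
lemma xq_mem (s : ℝ) : xq F s ∈ ({x ∈ Set.Icc (0:ℝ) 1 | s ≤ F x} ∪ {1}) := by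
  apply IsClosed.csInf_mem
  · exact ((isClosed_Icc.inter (isClosed_le continuous_const hFc)).union isClosed_singleton)
  · exact ⟨1, Or.inr rfl⟩
  · exact ⟨0, fun y hy => (Kq_subset s hy).1⟩

include hFc in
lemma xq_icc (s : ℝ) : xq F s ∈ Set.Icc (0:ℝ) 1 := Kq_subset s (xq_mem hFc s)

include hFc in
lemma xq_ge (s : ℝ) (hs : s ≤ F 1) : s ≤ F (xq F s) := by
  rcases xq_mem hFc s with ⟨_, h⟩ | h
  · exact h
  · simp only [Set.mem_singleton_iff] at h; rw [h]; exact hs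

lemma xq_mono : Monotone (xq F) := by
  intro s t hst
  apply csInf_le_csInf
  · exact ⟨0, fun y hy => (Kq_subset s hy).1⟩
  · exact ⟨1, Or.inr rfl⟩
  · rintro x (⟨hx1, hx2⟩ | hx)
    · exact Or.inl ⟨hx1, hst.trans hx2⟩
    · exact Or.inr hx

include hFc hF0 in
lemma xq_spec {s : ℝ} (hs : 0 ≤ s) (hs' : s ≤ F 1) : F (xq F s) = s := by
  have hge := xq_ge hFc s hs'
  have h0 : (0:ℝ) ≤ xq F s := (xq_icc hFc s).1
  have hmem : s ∈ Set.Icc (F 0) (F (xq F s)) := ⟨by rw [hF0]; exact hs, hge⟩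
  obtain ⟨z, hz, hFz⟩ := intermediate_value_Icc h0 hFc.continuousOn hmem
  have hzK : z ∈ ({x ∈ Set.Icc (0:ℝ) 1 | s ≤ F x} ∪ {1}) :=
    Or.inl ⟨⟨hz.1, hz.2.trans (xq_icc hFc s).2⟩, hFz.ge⟩
  have : xq F s ≤ z := csInf_le ⟨0, fun y hy => (Kq_subset s hy).1⟩ hzK
  have hzeq : z = xq F s := le_antisymm hz.2 this
  rw [← hzeq, hFz]

include hFc hFm hF0 in
lemma xq_le_iff {p s : ℝ} (hp : p ∈ Set.Icc (0:ℝ) 1) (hs : 0 ≤ s) (hs' : s ≤ F 1) :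
    xq F s ≤ p ↔ s ≤ F p := by
  constructor
  · intro h
    calc s = F (xq F s) := (xq_spec hFc hF0 hs hs').symm
    _ ≤ F p := hFm h
  · intro h
    exact csInf_le ⟨0, fun y hy => (Kq_subset s hy).1⟩ (Or.inl ⟨hp, h⟩)

include hFm in
lemma xq_of_gt {t : ℝ} (ht : F 1 < t) : xq F t = 1 := by
  have : {x ∈ Set.Icc (0:ℝ) 1 | t ≤ F x} = ∅ := by
    ext x
    simp only [Set.mem_setOf_eq, Set.mem_empty_iff_false, iff_false, not_and]
    intro hx
    exact not_le.mpr (lt_of_le_of_lt (hFm hx.2) ht)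
  rw [xq, this, Set.empty_union, csInf_singleton]

include hFc in
lemma xQ_mem (s : ℝ) : xQ F s ∈ ({x ∈ Set.Icc (0:ℝ) 1 | F x ≤ s} ∪ {0}) := by
  apply IsClosed.csSup_mem
  · exact ((isClosed_Icc.inter (isClosed_le hFc continuous_const)).union isClosed_singleton)
  · exact ⟨0, Or.inr rfl⟩
  · exact ⟨1, fun y hy => (KQ_subset s hy).2⟩

include hFc in
lemma xQ_icc (s : ℝ) : xQ F s ∈ Set.Icc (0:ℝ) 1 := KQ_subset s (xQ_mem hFc s)

include hFc hF0 in
lemma xQ_le (s : ℝ) (hs : 0 ≤ s) : F (xQ F s) ≤ s := by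
  rcases xQ_mem hFc s with ⟨_, h⟩ | h
  · exact h
  · simp only [Set.mem_singleton_iff] at h; rw [h, hF0]; exact hs

include hFc hF0 in
lemma xQ_spec {s : ℝ} (hs : 0 ≤ s) (hs' : s ≤ F 1) : F (xQ F s) = s := by
  have hle := xQ_le hFc hF0 s hs
  have h1 : xQ F s ≤ 1 := (xQ_icc hFc s).2
  have hmem : s ∈ Set.Icc (F (xQ F s)) (F 1) := ⟨hle, hs'⟩
  obtain ⟨z, hz, hFz⟩ := intermediate_value_Icc h1 hFc.continuousOn hmem
  have hzK : z ∈ ({x ∈ Set.Icc (0:ℝ) 1 | F x ≤ s} ∪ {0}) :=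
    Or.inl ⟨⟨(xQ_icc hFc s).1.trans hz.1, hz.2⟩, hFz.le⟩
  have : z ≤ xQ F s := le_csSup ⟨1, fun y hy => (KQ_subset s hy).2⟩ hzK
  have hzeq : z = xQ F s := le_antisymm this hz.1
  rw [← hzeq, hFz]

include hFc hF0 in
lemma xq_le_xQ {s : ℝ} (hs : 0 ≤ s) (hs' : s ≤ F 1) : xq F s ≤ xQ F s := by
  apply le_csSup ⟨1, fun y hy => (KQ_subset s hy).2⟩
  exact Or.inl ⟨xq_icc hFc s, (xq_spec hFc hF0 hs hs').le⟩

include hFc hFm in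
lemma xQ_le_xq {s t : ℝ} (hst : s < t) : xQ F s ≤ xq F t := by
  apply csSup_le ⟨(0:ℝ), Or.inr rfl⟩
  rintro x (⟨hx1, hx2⟩ | hx)
  · by_contra hgt
    push_neg at hgt
    have h1 : t ≤ F (xq F t) := by
      rcases le_or_gt t (F 1) with h | h
      · exact xq_ge hFc t h
      · exact absurd (hgt.trans_le hx1.2) (by rw [xq_of_gt hFm h]; exact lt_irrefl 1 ∘ id)
    have := hFm hgt.le
    linarith
  · simp only [Set.mem_singleton_iff] at hx; rw [hx]; exact (xq_icc hFc t).1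

include hFc hFm hF0 hFnn in
lemma xq_left_cont {s : ℝ} (hs : 0 ≤ s) (hs' : s ≤ F 1) :
    Tendsto (xq F) (𝓝[<] s) (𝓝 (xq F s)) := by
  have h := (xq_mono (F := F)).tendsto_nhdsLT s
  have himne : ((xq F) '' Set.Iio s).Nonempty := ⟨xq F (s - 1), ⟨s - 1, by simp, rfl⟩⟩
  have hub : xq F s ∈ upperBounds ((xq F) '' Set.Iio s) := by
    rintro y ⟨t, ht, rfl⟩; exact xq_mono ht.le
  have hbdd : BddAbove ((xq F) '' Set.Iio s) := ⟨xq F s, hub⟩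
  have hL_le : sSup ((xq F) '' Set.Iio s) ≤ xq F s := csSup_le himne hub
  have hle_L : xq F s ≤ sSup ((xq F) '' Set.Iio s) := by
    set L := sSup ((xq F) '' Set.Iio s) with hL
    have hLicc : L ∈ Set.Icc (0:ℝ) 1 := by
      constructor
      · exact le_trans (xq_icc hFc (s-1)).1 (le_csSup hbdd ⟨s - 1, by simp, rfl⟩)
      · exact hL_le.trans (xq_icc hFc s).2
    have hFL : s ≤ F L := by
      rcases eq_or_lt_of_le hs with heq | hpos
      · rw [← heq]; exact hFnn L
      · by_contra hlt
        push_neg at hlt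
        set t := (F L + s) / 2 with htdef
        have ht1 : F L < t := by simp [htdef]; linarith
        have ht2 : t < s := by simp [htdef]; linarith
        have ht0 : 0 ≤ t := by have := hFnn L; simp [htdef]; linarith
        have hxqt : xq F t ≤ L := le_csSup hbdd ⟨t, ht2, rfl⟩
        have : t = F (xq F t) := (xq_spec hFc hF0 ht0 (ht2.le.trans hs')).symm
        have : t ≤ F L := this.le.trans (hFm hxqt)
        linarith
    exact csInf_le ⟨0, fun y hy => (Kq_subset s hy).1⟩ (Or.inl ⟨hLicc, hFL⟩)
  rw [le_antisymm hL_le hle_L] at h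
  exact h

include hFc hFm in
lemma xq_right_lim (s : ℝ) :
    Tendsto (xq F) (𝓝[>] s) (𝓝 (xQ F s)) := by
  have h := (xq_mono (F := F)).tendsto_nhdsGT s
  have himne : ((xq F) '' Set.Ioi s).Nonempty := ⟨xq F (s + 1), ⟨s + 1, by simp, rfl⟩⟩
  have hlb : xQ F s ∈ lowerBounds ((xq F) '' Set.Ioi s) := by
    rintro y ⟨t, ht, rfl⟩; exact xQ_le_xq hFc hFm ht
  have hbdd : BddBelow ((xq F) '' Set.Ioi s) := ⟨xQ F s, hlb⟩
  have hge : xQ F s ≤ sInf ((xq F) '' Set.Ioi s) := le_csInf himne (fun y hy => hlb hy)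
  have hle : sInf ((xq F) '' Set.Ioi s) ≤ xQ F s := by
    apply le_of_forall_pos_le_add
    intro ε hε
    rcases le_or_gt 1 (xQ F s + ε) with h1 | h1
    · calc sInf ((xq F) '' Set.Ioi s) ≤ xq F (s + 1) := csInf_le hbdd ⟨s + 1, by simp, rfl⟩
      _ ≤ 1 := (xq_icc hFc (s+1)).2
      _ ≤ xQ F s + ε := h1
    · set y := xQ F s + ε with hy
      have hyicc : y ∈ Set.Icc (0:ℝ) 1 :=
        ⟨by have := (xQ_icc hFc s).1; simp [hy]; linarith, h1.le⟩
      have hts : s < F y := by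
        by_contra hle2
        push_neg at hle2
        have : y ≤ xQ F s := le_csSup ⟨1, fun z hz => (KQ_subset s hz).2⟩ (Or.inl ⟨hyicc, hle2⟩)
        simp [hy] at this; linarith
      have hxqy : xq F (F y) ≤ y :=
        csInf_le ⟨0, fun z hz => (Kq_subset (F y) hz).1⟩ (Or.inl ⟨hyicc, le_rfl⟩)
      calc sInf ((xq F) '' Set.Ioi s) ≤ xq F (F y) := csInf_le hbdd ⟨F y, hts, rfl⟩
      _ ≤ y := hxqy
  rw [le_antisymm hle hge] at h
  exact h

end quantile
noncomputable def cdf (μ : Measure ℝ) (H : Set ℝ) (x : ℝ) : ℝ := (μ (H ∩ Set.Iio x)).toReal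

lemma tendsto_Iic_of_Iio {f : ℝ → ℝ} {x L : ℝ} (h : Tendsto f (𝓝[<] x) (𝓝 L)) (hx : f x = L) :
    Tendsto f (𝓝[≤] x) (𝓝 L) := by
  rw [← Set.Iio_union_right, nhdsWithin_union]
  refine Filter.Tendsto.sup h ?_
  rw [nhdsWithin_singleton, ← hx]
  exact (tendsto_pure_pure f x).mono_right (pure_le_nhds _)

lemma tendsto_shift_Iic (β x : ℝ) : Tendsto (· + β) (𝓝[≤] x) (𝓝[≤] (x + β)) := by
  apply tendsto_nhdsWithin_of_tendsto_nhds_of_eventually_within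
  · exact ((continuous_id.add continuous_const).tendsto x).mono_left nhdsWithin_le_nhds
  · filter_upwards [self_mem_nhdsWithin] with y hy
    exact add_le_add_left (Set.mem_Iic.mp hy) β

lemma tendsto_shift_Ioi (β x : ℝ) : Tendsto (· + β) (𝓝[>] x) (𝓝[>] (x + β)) := by
  apply tendsto_nhdsWithin_of_tendsto_nhds_of_eventually_within
  · exact ((continuous_id.add continuous_const).tendsto x).mono_left nhdsWithin_le_nhds
  · filter_upwards [self_mem_nhdsWithin] with y hy
    exact add_lt_add_left (Set.mem_Ioi.mp hy) β


end SWaux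

namespace SWaux
section crossing

variable (ui uj : Measure ℝ) [IsFiniteMeasure ui] [IsFiniteMeasure uj]
variable (H : Set ℝ)

/-- the common-proportion window function -/
noncomputable def psi (β s : ℝ) : ℝ :=
  cdf uj H (xq (cdf ui H) (s + β)) - cdf uj H (xq (cdf ui H) s)

lemma cdf_zero (μ : Measure ℝ) (hHsub : H ⊆ Set.Ico (0:ℝ) 1) : cdf μ H 0 = 0 := by
  have : H ∩ Set.Iio (0:ℝ) = ∅ := by
    ext z
    simp only [Set.mem_inter_iff, Set.mem_Iio, Set.mem_empty_iff_false, iff_false]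
    rintro ⟨hz, hz'⟩; exact absurd (hHsub hz).1 (not_le.mpr hz')
  rw [cdf, this]; simp

lemma cdf_one (μ : Measure ℝ) (hHsub : H ⊆ Set.Ico (0:ℝ) 1) : cdf μ H 1 = (μ H).toReal := by
  unfold cdf
  congr 2
  rw [Set.inter_eq_left]
  exact fun z hz => (hHsub hz).2

lemma crossing [IsFiniteMeasure ui] [IsFiniteMeasure uj]
    (hui : ∀ x : ℝ, ui {x} = 0) (huj : ∀ x : ℝ, uj {x} = 0)
    (hHm : MeasurableSet H) (hHsub : H ⊆ Set.Ico (0:ℝ) 1)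
    (β c : ℝ) (hβ : 0 < β)
    (s₁ s₂ : ℝ) (hs₁ : s₁ ∈ Set.Icc 0 ((ui H).toReal - β)) (hs₂ : s₂ ∈ Set.Icc 0 ((ui H).toReal - β))
    (h₁ : psi ui uj H β s₁ ≤ c) (h₂ : c ≤ psi ui uj H β s₂) :
    ∃ S, S ⊆ H ∧ MeasurableSet S ∧ (ui S).toReal = β ∧ (uj S).toReal = c := by
  set F := cdf ui H with hF
  set G := cdf uj H with hG
  set M := (ui H).toReal with hM
  have hFc : Continuous F := cdf_cont ui hui H hHm
  have hFm : Monotone F := cdf_mono ui H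
  have hF0 : F 0 = 0 := cdf_zero H ui hHsub
  have hFnn : ∀ x, 0 ≤ F x := fun x => ENNReal.toReal_nonneg
  have hGc : Continuous G := cdf_cont uj huj H hHm
  have hGm : Monotone G := cdf_mono uj H
  have hF1 : F 1 = M := cdf_one H ui hHsub
  -- the easy epilogue from a straddle point
  suffices hmain : ∃ s' ∈ Set.Icc 0 (M - β),
      (min (G (xq F (s' + β)) - G (xq F s')) (G (xQ F (s' + β)) - G (xQ F s')) ≤ c ∧
       c ≤ max (G (xq F (s' + β)) - G (xq F s')) (G (xQ F (s' + β)) - G (xQ F s'))) by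
    obtain ⟨s', hs', hmin, hmax⟩ := hmain
    have hs'0 : (0:ℝ) ≤ s' := hs'.1
    have hs'M : s' ≤ F 1 := by rw [hF1]; linarith [hs'.2]
    have hsβ0 : (0:ℝ) ≤ s' + β := by linarith
    have hsβM : s' + β ≤ F 1 := by rw [hF1]; linarith [hs'.2]
    have hz12 : xq F s' ≤ xQ F s' := xq_le_xQ hFc hF0 hs'0 hs'M
    have hz2w1 : xQ F s' ≤ xq F (s' + β) := xQ_le_xq hFc hFm (by linarith)
    have hw12 : xq F (s' + β) ≤ xQ F (s' + β) := xq_le_xQ hFc hF0 hsβ0 hsβM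
    have hFz1 : F (xq F s') = s' := xq_spec hFc hF0 hs'0 hs'M
    have hFz2 : F (xQ F s') = s' := xQ_spec hFc hF0 hs'0 hs'M
    have hFw1 : F (xq F (s' + β)) = s' + β := xq_spec hFc hF0 hsβ0 hsβM
    have hFw2 : F (xQ F (s' + β)) = s' + β := xQ_spec hFc hF0 hsβ0 hsβM
    set C := H ∩ Set.Ico (xQ F s') (xq F (s' + β)) with hC
    set D := H ∩ Set.Ico (xq F s') (xQ F (s' + β)) with hD
    have hCm : MeasurableSet C := hHm.inter measurableSet_Ico
    have hDm : MeasurableSet D := hHm.inter measurableSet_Ico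
    have hCD : C ⊆ D := Set.inter_subset_inter_right H
      (Set.Ico_subset_Ico hz12 hw12)
    have hDsub : D ⊆ Set.Ico (0:ℝ) 1 := Set.inter_subset_left.trans hHsub
    have hCui : (ui C).toReal = β := by
      rw [hC, meas_split_real ui H hHm hz2w1]
      show F _ - F _ = β
      rw [hFw1, hFz2]; ring
    have hDui : (ui D).toReal = β := by
      rw [hD, meas_split_real ui H hHm (hz12.trans (hz2w1.trans hw12))]
      show F _ - F _ = β
      rw [hFw2, hFz1]; ring
    have hCuj : (uj C).toReal = G (xq F (s' + β)) - G (xQ F s') :=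
      meas_split_real uj H hHm hz2w1
    have hDuj : (uj D).toReal = G (xQ F (s' + β)) - G (xq F s') :=
      meas_split_real uj H hHm (hz12.trans (hz2w1.trans hw12))
    have hCle : (uj C).toReal ≤ c := by
      rw [hCuj]
      refine le_trans (le_min ?_ ?_) hmin
      · exact sub_le_sub le_rfl (hGm hz12)
      · exact sub_le_sub (hGm hw12) le_rfl
    have hDge : c ≤ (uj D).toReal := by
      rw [hDuj]
      refine le_trans hmax (max_le ?_ ?_)
      · exact sub_le_sub (hGm hw12) le_rfl
      · exact sub_le_sub le_rfl (hGm hz12)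
    obtain ⟨S, hSD, hSm, hSui, hSuj⟩ :=
      fill_in ui uj huj C D hCm hDm hCD hDsub hCle hDge (by rw [hCui, hDui])
    exact ⟨S, hSD.trans Set.inter_subset_left, hSm, by rw [hSui, hCui], hSuj⟩
  set ψ : ℝ → ℝ := fun s => G (xq F (s + β)) - G (xq F s) with hψdef
  have hψ₁ : ψ s₁ ≤ c := h₁
  have hψ₂ : c ≤ ψ s₂ := h₂
  have hleft : ∀ t : ℝ, 0 ≤ t → t ≤ M - β →
      Tendsto ψ (𝓝[≤] t) (𝓝 (ψ t)) := by
    intro t ht0 htM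
    have h1 : Tendsto (xq F) (𝓝[≤] t) (𝓝 (xq F t)) :=
      tendsto_Iic_of_Iio (xq_left_cont hFc hFm hF0 hFnn ht0 (by rw [hF1]; linarith)) rfl
    have h2 : Tendsto (xq F) (𝓝[≤] (t + β)) (𝓝 (xq F (t + β))) :=
      tendsto_Iic_of_Iio
        (xq_left_cont hFc hFm hF0 hFnn (by linarith) (by rw [hF1]; linarith)) rfl
    exact (((hGc.tendsto _).comp (h2.comp (tendsto_shift_Iic β t))).sub
      ((hGc.tendsto _).comp h1))
  have hright : ∀ t : ℝ, Tendsto ψ (𝓝[>] t) (𝓝 (G (xQ F (t + β)) - G (xQ F t))) := by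
    intro t
    have h1 : Tendsto (xq F) (𝓝[>] t) (𝓝 (xQ F t)) := xq_right_lim hFc hFm t
    have h2 : Tendsto (xq F) (𝓝[>] (t + β)) (𝓝 (xQ F (t + β))) := xq_right_lim hFc hFm (t + β)
    exact (((hGc.tendsto _).comp (h2.comp (tendsto_shift_Ioi β t))).sub
      ((hGc.tendsto _).comp h1))
  rcases le_total s₁ s₂ with hord | hord
  · set T := {s | s ∈ Set.Icc s₁ s₂ ∧ ψ s ≤ c} with hT
    have hTne : s₁ ∈ T := ⟨⟨le_rfl, hord⟩, hψ₁⟩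
    have hTbdd : BddAbove T := ⟨s₂, fun x hx => hx.1.2⟩
    set t := sSup T with ht
    have hts1 : s₁ ≤ t := le_csSup hTbdd hTne
    have hts2 : t ≤ s₂ := csSup_le ⟨s₁, hTne⟩ (fun x hx => hx.1.2)
    have ht0 : (0:ℝ) ≤ t := le_trans hs₁.1 hts1
    have htM : t ≤ M - β := le_trans hts2 hs₂.2
    obtain ⟨u, _, hulim, humem⟩ := exists_seq_tendsto_sSup ⟨s₁, hTne⟩ hTbdd
    have htle : ψ t ≤ c := by
      have hcomp : Tendsto (fun n => ψ (u n)) atTop (𝓝 (ψ t)) :=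
        (hleft t ht0 htM).comp (tendsto_nhdsWithin_of_tendsto_nhds_of_eventually_within u hulim
          (Eventually.of_forall fun n => le_csSup hTbdd (humem n)))
      exact le_of_tendsto hcomp (Eventually.of_forall fun n => (humem n).2)
    rcases le_or_gt c (ψ t) with hge | hlt
    · exact ⟨t, ⟨ht0, htM⟩, le_trans (min_le_left _ _) htle,
        le_trans hge (le_max_left _ _)⟩
    · have hts2' : t < s₂ := by
        rcases lt_or_eq_of_le hts2 with h | h
        · exact h
        · rw [h] at hlt; linarith
      have hionq : ∀ s ∈ Set.Ioc t s₂, c < ψ s := by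
        intro s hs
        by_contra hle
        push_neg at hle
        have hmem' : s ∈ T := ⟨⟨le_trans hts1 hs.1.le, hs.2⟩, hle⟩
        exact absurd (le_csSup hTbdd hmem') (not_le.mpr hs.1)
      have hhi : c ≤ G (xQ F (t + β)) - G (xQ F t) := by
        refine ge_of_tendsto (hright t) ?_
        filter_upwards [Ioc_mem_nhdsGT_of_mem (Set.mem_Ico.mpr ⟨le_rfl, hts2'⟩)] with s hs
        exact (hionq s hs).le
      exact ⟨t, ⟨ht0, htM⟩, le_trans (min_le_left _ _) htle,
        le_trans hhi (le_max_right _ _)⟩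
  · set T := {s | s ∈ Set.Icc s₂ s₁ ∧ c ≤ ψ s} with hT
    have hTne : s₂ ∈ T := ⟨⟨le_rfl, hord⟩, hψ₂⟩
    have hTbdd : BddAbove T := ⟨s₁, fun x hx => hx.1.2⟩
    set t := sSup T with ht
    have hts1 : s₂ ≤ t := le_csSup hTbdd hTne
    have hts2 : t ≤ s₁ := csSup_le ⟨s₂, hTne⟩ (fun x hx => hx.1.2)
    have ht0 : (0:ℝ) ≤ t := le_trans hs₂.1 hts1
    have htM : t ≤ M - β := le_trans hts2 hs₁.2
    obtain ⟨u, _, hulim, humem⟩ := exists_seq_tendsto_sSup ⟨s₂, hTne⟩ hTbdd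
    have htge : c ≤ ψ t := by
      have hcomp : Tendsto (fun n => ψ (u n)) atTop (𝓝 (ψ t)) :=
        (hleft t ht0 htM).comp (tendsto_nhdsWithin_of_tendsto_nhds_of_eventually_within u hulim
          (Eventually.of_forall fun n => le_csSup hTbdd (humem n)))
      exact ge_of_tendsto hcomp (Eventually.of_forall fun n => (humem n).2)
    rcases le_or_gt (ψ t) c with hge | hlt
    · exact ⟨t, ⟨ht0, htM⟩, le_trans (min_le_left _ _) hge,
        le_trans htge (le_max_left _ _)⟩
    · have hts2' : t < s₁ := by
        rcases lt_or_eq_of_le hts2 with h | h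
        · exact h
        · rw [h] at hlt; linarith
      have hionq : ∀ s ∈ Set.Ioc t s₁, ψ s < c := by
        intro s hs
        by_contra hle
        push_neg at hle
        have hmem' : s ∈ T := ⟨⟨le_trans hts1 hs.1.le, hs.2⟩, hle⟩
        exact absurd (le_csSup hTbdd hmem') (not_le.mpr hs.1)
      have hhi : G (xQ F (t + β)) - G (xQ F t) ≤ c := by
        refine le_of_tendsto (hright t) ?_
        filter_upwards [Ioc_mem_nhdsGT_of_mem (Set.mem_Ico.mpr ⟨le_rfl, hts2'⟩)] with s hs
        exact (hionq s hs).le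
      exact ⟨t, ⟨ht0, htM⟩, le_trans (min_le_right _ _) hhi,
        le_trans htge (le_max_left _ _)⟩

end crossing

section fubini

lemma xq_zero {F : ℝ → ℝ} (hFnn : ∀ x, 0 ≤ F x) : xq F 0 = 0 := by
  unfold xq
  have h1 : {x ∈ Set.Icc (0:ℝ) 1 | (0:ℝ) ≤ F x} = Set.Icc 0 1 := by
    ext x; simp [hFnn x]
  have h2 : Set.Icc (0:ℝ) 1 ∪ {1} = Set.Icc 0 1 :=
    Set.union_eq_self_of_subset_right (by simp)
  rw [h1, h2, csInf_Icc zero_le_one]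

lemma compl_split (μ : Measure ℝ) [IsFiniteMeasure μ] (H : Set ℝ) (hHm : MeasurableSet H)
    (z : ℝ) : (μ (H ∩ Set.Ici z)).toReal = (μ H).toReal - cdf μ H z := by
  have key : μ (H ∩ Set.Iio z) + μ (H ∩ Set.Ici z) = μ H := by
    rw [← measure_union ?_ (hHm.inter measurableSet_Ici)]
    · rw [← Set.inter_union_distrib_left, Set.Iio_union_Ici, Set.inter_univ]
    · exact Set.disjoint_left.mpr (fun p hp hp' => absurd (Set.mem_Iio.mp hp.2) (not_lt.mpr hp'.2))
  rw [cdf, ← key, ENNReal.toReal_add (measure_ne_top μ _) (measure_ne_top μ _)]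
  ring

lemma vol_inter (c q β : ℝ) :
    volume (Set.Icc 0 c ∩ Set.Ioc (q - β) q) = ENNReal.ofReal (min q c - max (q - β) 0) := by
  apply le_antisymm
  · calc volume (Set.Icc 0 c ∩ Set.Ioc (q - β) q)
        ≤ volume (Set.Icc (max (q - β) 0) (min q c)) := by
          apply measure_mono
          rintro s ⟨⟨hs1, hs2⟩, hs3, hs4⟩
          exact ⟨max_le hs3.le hs1, le_min hs4 hs2⟩
    _ = ENNReal.ofReal (min q c - max (q - β) 0) := Real.volume_Icc
  · calc ENNReal.ofReal (min q c - max (q - β) 0)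
        = volume (Set.Ioc (max (q - β) 0) (min q c)) := Real.volume_Ioc.symm
    _ ≤ volume (Set.Icc 0 c ∩ Set.Ioc (q - β) q) := by
          apply measure_mono
          rintro s ⟨hs1, hs2⟩
          have h0 : (0:ℝ) ≤ max (q - β) 0 := le_max_right _ _
          have hqβ : q - β ≤ max (q - β) 0 := le_max_left _ _
          exact ⟨⟨h0.trans hs1.le, hs2.trans (min_le_right _ _)⟩,
            hqβ.trans_lt hs1, hs2.trans (min_le_left _ _)⟩

lemma min_max_identity {q a M : ℝ} :
    min q (M - a) - max (q - a) 0 = min q a - max (q - (M - a)) 0 := by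
  have e1 : ∀ x y : ℝ, min x y + max (x - y) 0 = x := by
    intro x y
    rcases le_total x y with h | h
    · rw [min_eq_left h, max_eq_right (sub_nonpos.mpr h)]; ring
    · rw [min_eq_right h, max_eq_left (sub_nonneg.mpr h)]; ring
  have h1 := e1 q (M - a)
  have h2 := e1 q a
  linarith

lemma Phi_eq (uj : Measure ℝ) [IsFiniteMeasure uj] (H : Set ℝ) (hHm : MeasurableSet H)
    {F : ℝ → ℝ} {β : ℝ} (hβ : 0 ≤ β) (s : ℝ) :
    uj (H ∩ Set.Ico (xq F s) (xq F (s + β)))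
      = uj (H ∩ Set.Iio (xq F (s + β))) - uj (H ∩ Set.Iio (xq F s)) := by
  have h := meas_split uj H hHm (xq_mono (F := F) (by linarith : s ≤ s + β))
  exact ENNReal.eq_sub_of_add_eq (measure_ne_top uj _) (by rw [add_comm]; exact h)

lemma Phi_measurable (uj : Measure ℝ) [IsFiniteMeasure uj] (H : Set ℝ) (hHm : MeasurableSet H)
    (F : ℝ → ℝ) {β : ℝ} (hβ : 0 ≤ β) :
    Measurable fun s => uj (H ∩ Set.Ico (xq F s) (xq F (s + β))) := by
  have hmono : Monotone fun r => uj (H ∩ Set.Iio r) := fun c d h =>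
    measure_mono (Set.inter_subset_inter_right _ (Set.Iio_subset_Iio h))
  have h1 : Measurable fun s => uj (H ∩ Set.Iio (xq F (s + β))) :=
    (hmono.comp (xq_mono.comp (monotone_id.add_const β))).measurable
  have h2 : Measurable fun s => uj (H ∩ Set.Iio (xq F s)) :=
    (hmono.comp xq_mono).measurable
  have : (fun s => uj (H ∩ Set.Ico (xq F s) (xq F (s + β))))
      = fun s => uj (H ∩ Set.Iio (xq F (s + β))) - uj (H ∩ Set.Iio (xq F s)) :=
    funext fun s => Phi_eq uj H hHm hβ s
  rw [this]
  exact h1.sub h2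

lemma fubini (ui uj : Measure ℝ) [IsFiniteMeasure ui] [IsFiniteMeasure uj]
    (hui : ∀ x : ℝ, ui {x} = 0)
    (H : Set ℝ) (hHm : MeasurableSet H) (hHsub : H ⊆ Set.Ico (0:ℝ) 1)
    (β : ℝ) (hβ0 : 0 < β) (hβM : β ≤ (ui H).toReal) :
    ∫⁻ s in Set.Icc 0 ((ui H).toReal - β),
        uj (H ∩ Set.Ico (xq (cdf ui H) s) (xq (cdf ui H) (s + β))) ∂volume
      = ∫⁻ p in H, volume (Set.Icc 0 ((ui H).toReal - β)
          ∩ Set.Ioc (cdf ui H p - β) (cdf ui H p)) ∂uj := by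
  set F := cdf ui H with hFdef
  set M := (ui H).toReal with hMdef
  have hFc : Continuous F := cdf_cont ui hui H hHm
  have hFm : Monotone F := cdf_mono ui H
  have hF0 : F 0 = 0 := cdf_zero H ui hHsub
  have hF1 : F 1 = M := cdf_one H ui hHsub
  set I := Set.Icc (0:ℝ) (M - β) with hIdef
  set S := {q : ℝ × ℝ | q.2 ∈ H ∧ xq F q.1 ≤ q.2 ∧ q.2 < xq F (q.1 + β)} with hSdef
  have hxqm : Measurable (xq F) := (xq_mono (F := F)).measurable
  have hS : MeasurableSet S := by
    rw [hSdef, Set.setOf_and, Set.setOf_and]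
    exact (hHm.preimage measurable_snd).inter
      ((measurableSet_le (hxqm.comp measurable_fst) measurable_snd).inter
        (measurableSet_lt measurable_snd (hxqm.comp (measurable_fst.add_const β))))
  have h1 := Measure.prod_apply (μ := volume.restrict I) (ν := uj) hS
  have h2 := Measure.prod_apply_symm (μ := volume.restrict I) (ν := uj) hS
  have hslice1 : ∀ s : ℝ, Prod.mk s ⁻¹' S = H ∩ Set.Ico (xq F s) (xq F (s + β)) := by
    intro s; ext p
    simp only [hSdef, Set.mem_preimage, Set.mem_setOf_eq, Set.mem_inter_iff, Set.mem_Ico]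
  have hLHS : ∫⁻ s in I, uj (H ∩ Set.Ico (xq F s) (xq F (s + β))) ∂volume
      = ((volume.restrict I).prod uj) S := by
    rw [h1]
    exact lintegral_congr fun s => by rw [hslice1 s]
  rw [hLHS, h2]
  have hslice2 : ∀ p ∈ H, (volume.restrict I) ((fun s => (s, p)) ⁻¹' S)
      = volume (I ∩ Set.Ioc (F p - β) (F p)) := by
    intro p hp
    rw [Measure.restrict_apply' measurableSet_Icc]
    congr 1
    ext s
    simp only [hSdef, Set.mem_preimage, Set.mem_setOf_eq, Set.mem_inter_iff, Set.mem_Ioc,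
      Set.mem_Icc]
    constructor
    · rintro ⟨⟨_, hle, hlt⟩, hs1, hs2⟩
      have hs0M : s ≤ F 1 := by rw [hF1]; linarith
      have hsβM : s + β ≤ F 1 := by rw [hF1]; linarith
      have hpIcc : p ∈ Set.Icc (0:ℝ) 1 := ⟨(hHsub hp).1, (hHsub hp).2.le⟩
      have e1 : s ≤ F p := (xq_le_iff hFc hFm hF0 hpIcc hs1 hs0M).mp hle
      have e2 : F p < s + β := by
        by_contra hge
        push_neg at hge
        exact absurd ((xq_le_iff hFc hFm hF0 hpIcc (by linarith) hsβM).mpr hge)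
          (not_le.mpr hlt)
      exact ⟨⟨hs1, hs2⟩, by linarith, e1⟩
    · rintro ⟨⟨hs1, hs2⟩, hlt, hle⟩
      have hs0M : s ≤ F 1 := by rw [hF1]; linarith
      have hsβM : s + β ≤ F 1 := by rw [hF1]; linarith
      have hpIcc : p ∈ Set.Icc (0:ℝ) 1 := ⟨(hHsub hp).1, (hHsub hp).2.le⟩
      refine ⟨⟨hp, ?_, ?_⟩, hs1, hs2⟩
      · exact (xq_le_iff hFc hFm hF0 hpIcc hs1 hs0M).mpr hle
      · by_contra hge
        push_neg at hge
        have := (xq_le_iff hFc hFm hF0 hpIcc (by linarith) hsβM).mp hge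
        linarith
  have hind : (fun p => (volume.restrict I) ((fun s => (s, p)) ⁻¹' S))
      = H.indicator (fun p => volume (I ∩ Set.Ioc (F p - β) (F p))) := by
    funext p
    by_cases hp : p ∈ H
    · rw [Set.indicator_of_mem hp]
      exact hslice2 p hp
    · rw [Set.indicator_of_notMem hp]
      have : ((fun s => (s, p)) ⁻¹' S) = ∅ := by
        ext s; simp only [hSdef, Set.mem_preimage, Set.mem_setOf_eq, Set.mem_empty_iff_false,
          iff_false]
        rintro ⟨hc, -⟩; exact hp hc
      rw [this]; simp
  rw [hind, lintegral_indicator hHm]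

end fubini
end SWaux

open SWaux in
/-- Stromquist–Woodall: let `u_i` and `u_j` be two non-atomic,
countably additive valuations on the Borel subsets of `[0,1)` (finite non-atomic
Borel measures), and let `H ⊆ [0,1)` be a Borel set with `u_i(H) > 0` and
`u_j(H) > 0`. Then for every `α ∈ [0,1]` there exists a Borel set `H' ⊆ H` with
`u_i(H') = α·u_i(H)` and `u_j(H') = α·u_j(H)`. -/
theorem stromquist_woodall
    (ui uj : Measure ℝ) [IsFiniteMeasure ui] [IsFiniteMeasure uj]
    (hui : ∀ x : ℝ, ui {x} = 0) (huj : ∀ x : ℝ, uj {x} = 0)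
    (H : Set ℝ) (hHm : MeasurableSet H) (hHsub : H ⊆ Set.Ico (0 : ℝ) 1)
    (hi : 0 < (ui H).toReal) (hj : 0 < (uj H).toReal)
    (α : ℝ) (hα0 : 0 ≤ α) (hα1 : α ≤ 1) :
    ∃ H' : Set ℝ, H' ⊆ H ∧ MeasurableSet H' ∧
      (ui H').toReal = α * (ui H).toReal ∧ (uj H').toReal = α * (uj H).toReal := by
  rcases eq_or_lt_of_le hα0 with h0 | hα0'
  · exact ⟨∅, Set.empty_subset H, MeasurableSet.empty, by simp [← h0], by simp [← h0]⟩
  rcases eq_or_lt_of_le hα1 with h1 | hα1'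
  · exact ⟨H, subset_rfl, hHm, by simp [h1], by simp [h1]⟩
  set F := cdf ui H with hFdef
  set G := cdf uj H with hGdef
  set M := (ui H).toReal with hMdef
  set tj := (uj H).toReal with htjdef
  set a := α * M with hadef
  set b := α * tj with hbdef
  have hFc : Continuous F := cdf_cont ui hui H hHm
  have hFm : Monotone F := cdf_mono ui H
  have hF0 : F 0 = 0 := cdf_zero H ui hHsub
  have hFnn : ∀ x, 0 ≤ F x := fun x => ENNReal.toReal_nonneg
  have hF1 : F 1 = M := cdf_one H ui hHsub
  have hGm : Monotone G := cdf_mono uj H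
  have hG0 : G 0 = 0 := cdf_zero H uj hHsub
  have hM0 : 0 < M := hi
  have htj0 : 0 < tj := hj
  have ha0 : 0 < a := mul_pos hα0' hM0
  have haM : a < M := by rw [hadef]; nlinarith
  have hb0 : 0 < b := mul_pos hα0' htj0
  have hbt : b < tj := by rw [hbdef]; nlinarith
  suffices h : ∃ S, S ⊆ H ∧ MeasurableSet S ∧ (ui S).toReal = a ∧ (uj S).toReal = b by
    obtain ⟨S, h1, h2, h3, h4⟩ := h
    exact ⟨S, h1, h2, h3, h4⟩
  by_cases hc1 : (∃ s ∈ Set.Icc (0:ℝ) (M - a), psi ui uj H a s ≤ b) ∧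
      (∃ s ∈ Set.Icc (0:ℝ) (M - a), b ≤ psi ui uj H a s)
  · obtain ⟨⟨s₁, hs₁, h₁⟩, ⟨s₂, hs₂, h₂⟩⟩ := hc1
    exact crossing ui uj H hui huj hHm hHsub a b ha0 s₁ s₂ hs₁ hs₂ h₁ h₂
  by_cases hc2 : (∃ s ∈ Set.Icc (0:ℝ) (M - (M - a)), psi ui uj H (M - a) s ≤ tj - b) ∧
      (∃ s ∈ Set.Icc (0:ℝ) (M - (M - a)), tj - b ≤ psi ui uj H (M - a) s)
  · obtain ⟨⟨s₁, hs₁, h₁⟩, ⟨s₂, hs₂, h₂⟩⟩ := hc2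
    obtain ⟨S, hSH, hSm, hSui, hSuj⟩ :=
      crossing ui uj H hui huj hHm hHsub (M - a) (tj - b) (by linarith) s₁ s₂ hs₁ hs₂ h₁ h₂
    refine ⟨H \ S, Set.diff_subset, hHm.diff hSm, ?_, ?_⟩
    · rw [measure_diff hSH hSm.nullMeasurableSet (measure_ne_top ui S),
        ENNReal.toReal_sub_of_le (measure_mono hSH) (measure_ne_top ui H), hSui]
      ring
    · rw [measure_diff hSH hSm.nullMeasurableSet (measure_ne_top uj S),
        ENNReal.toReal_sub_of_le (measure_mono hSH) (measure_ne_top uj H), hSuj]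
      ring
  rw [not_and_or] at hc1 hc2
  have hc1' : (∀ s ∈ Set.Icc (0:ℝ) (M - a), b < psi ui uj H a s) ∨
      (∀ s ∈ Set.Icc (0:ℝ) (M - a), psi ui uj H a s < b) := by
    rcases hc1 with h | h
    · left; push_neg at h; exact h
    · right; push_neg at h; exact h
  have hc2' : (∀ s ∈ Set.Icc (0:ℝ) (M - (M - a)), tj - b < psi ui uj H (M - a) s) ∨
      (∀ s ∈ Set.Icc (0:ℝ) (M - (M - a)), psi ui uj H (M - a) s < tj - b) := by
    rcases hc2 with h | h
    · left; push_neg at h; exact h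
    · right; push_neg at h; exact h
  -- common quantile facts
  have hxq0 : xq F 0 = 0 := xq_zero hFnn
  have hFXa : F (xq F a) = a := xq_spec hFc hF0 ha0.le (by rw [hF1]; linarith)
  have hFXM : F (xq F M) = M := xq_spec hFc hF0 hM0.le (by rw [hF1])
  have hFXMa : F (xq F (M - a)) = M - a := xq_spec hFc hF0 (by linarith) (by rw [hF1]; linarith)
  have hpsia0 : psi ui uj H a 0 = G (xq F a) := by
    show G (xq F (0 + a)) - G (xq F 0) = G (xq F a)
    rw [zero_add, hxq0, hG0, sub_zero]
  have hpsiMa0 : psi ui uj H (M - a) 0 = G (xq F (M - a)) := by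
    show G (xq F (0 + (M - a))) - G (xq F 0) = G (xq F (M - a))
    rw [zero_add, hxq0, hG0, sub_zero]
  have hpsiMaa : psi ui uj H (M - a) a = G (xq F M) - G (xq F a) := by
    show G (xq F (a + (M - a))) - G (xq F a) = _
    rw [show a + (M - a) = M by ring]
  have hpsiaMa : psi ui uj H a (M - a) = G (xq F M) - G (xq F (M - a)) := by
    show G (xq F (M - a + a)) - G (xq F (M - a)) = _
    rw [show M - a + a = M by ring]
  rcases hc1' with hA | hA <;> rcases hc2' with hB | hB
  · -- all > b  and  all > tj - b : direct contradiction
    exfalso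
    have h1 : b < G (xq F a) := by
      have := hA 0 ⟨le_rfl, by linarith⟩
      rwa [hpsia0] at this
    have h2 : tj - b < G (xq F M) - G (xq F a) := by
      have := hB a ⟨ha0.le, by linarith⟩
      · rwa [hpsiMaa] at this
    have hWE : (uj (H ∩ Set.Ico (xq F a) (xq F M))).toReal
        ≤ (uj (H ∩ Set.Ici (xq F a))).toReal := by
      refine ENNReal.toReal_mono (measure_ne_top uj _) (measure_mono ?_)
      exact Set.inter_subset_inter_right _ Set.Ico_subset_Ici_self
    rw [meas_split_real uj H hHm (xq_mono (by linarith : a ≤ M)),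
      compl_split uj H hHm (xq F a)] at hWE
    show False
    have : G (xq F M) - G (xq F a) ≤ tj - G (xq F a) := hWE
    linarith
  · -- all > b and all < tj - b : integral contradiction
    exfalso
    have hfub1 := fubini ui uj hui H hHm hHsub a ha0 haM.le
    have hfub2 := fubini ui uj hui H hHm hHsub (M - a) (by linarith) (by linarith)
    have hMMa : M - (M - a) = a := by ring
    rw [hMMa] at hfub2 hB
    have hptwise : ∀ p ∈ H, volume (Set.Icc 0 (M - a) ∩ Set.Ioc (F p - a) (F p))
        = volume (Set.Icc 0 a ∩ Set.Ioc (F p - (M - a)) (F p)) := by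
      intro p _
      rw [vol_inter, vol_inter, min_max_identity]
    have hint_eq : ∫⁻ s in Set.Icc 0 (M - a),
          uj (H ∩ Set.Ico (xq F s) (xq F (s + a))) ∂volume
        = ∫⁻ s in Set.Icc 0 a,
          uj (H ∩ Set.Ico (xq F s) (xq F (s + (M - a)))) ∂volume := by
      rw [hfub1, hfub2]
      exact lintegral_congr_ae ((ae_restrict_iff' hHm).mpr
        (Filter.Eventually.of_forall hptwise))
    have hvol1 : volume (Set.Icc (0:ℝ) (M - a)) = ENNReal.ofReal (M - a) := by
      rw [Real.volume_Icc, sub_zero]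
    have hvol2 : volume (Set.Icc (0:ℝ) a) = ENNReal.ofReal a := by
      rw [Real.volume_Icc, sub_zero]
    have hΦ1toReal : ∀ s : ℝ, (uj (H ∩ Set.Ico (xq F s) (xq F (s + a)))).toReal
        = psi ui uj H a s := fun s => meas_split_real uj H hHm (xq_mono (by linarith))
    have hΦ2toReal : ∀ s : ℝ, (uj (H ∩ Set.Ico (xq F s) (xq F (s + (M - a))))).toReal
        = psi ui uj H (M - a) s := fun s => meas_split_real uj H hHm (xq_mono (by linarith))
    -- strict bound from below on the first integral
    have hgt1 : ENNReal.ofReal b * volume (Set.Icc (0:ℝ) (M - a))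
        < ∫⁻ s in Set.Icc 0 (M - a), uj (H ∩ Set.Ico (xq F s) (xq F (s + a))) ∂volume := by
      have := setLIntegral_strict_mono (f := fun _ => ENNReal.ofReal b)
        (g := fun s => uj (H ∩ Set.Ico (xq F s) (xq F (s + a))))
        measurableSet_Icc
        (by rw [hvol1]; simp only [ne_eq, ENNReal.ofReal_eq_zero, not_le]; linarith)
        (Phi_measurable uj H hHm F ha0.le)
        (by rw [setLIntegral_const, hvol1]; exact ENNReal.mul_ne_top ENNReal.ofReal_ne_top ENNReal.ofReal_ne_top)
        (Filter.Eventually.of_forall (fun s hs => by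
          have hlt := hA s hs
          show ENNReal.ofReal b < uj (H ∩ Set.Ico (xq F s) (xq F (s + a)))
          rw [← ENNReal.ofReal_toReal (measure_ne_top uj (H ∩ Set.Ico (xq F s) (xq F (s + a)))),
            hΦ1toReal s]
          exact (ENNReal.ofReal_lt_ofReal_iff (lt_trans hb0 hlt)).mpr hlt))
      rwa [setLIntegral_const] at this
    -- strict bound from above on the second integral
    have hlt2 : ∫⁻ s in Set.Icc 0 a, uj (H ∩ Set.Ico (xq F s) (xq F (s + (M - a)))) ∂volume
        < ENNReal.ofReal (tj - b) * volume (Set.Icc (0:ℝ) a) := by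
      have hfin : ∫⁻ s in Set.Icc 0 a,
          uj (H ∩ Set.Ico (xq F s) (xq F (s + (M - a)))) ∂volume ≠ ⊤ := by
        refine ne_top_of_le_ne_top ?_ (lintegral_mono (g := fun _ => uj H)
          (fun s => measure_mono Set.inter_subset_left))
        rw [setLIntegral_const, hvol2]
        exact ENNReal.mul_ne_top (measure_ne_top uj H) ENNReal.ofReal_ne_top
      have := setLIntegral_strict_mono
        (f := fun s => uj (H ∩ Set.Ico (xq F s) (xq F (s + (M - a)))))
        (g := fun _ => ENNReal.ofReal (tj - b))
        measurableSet_Icc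
        (by rw [hvol2]; simp only [ne_eq, ENNReal.ofReal_eq_zero, not_le]; linarith)
        measurable_const
        hfin
        (Filter.Eventually.of_forall (fun s hs => by
          have hlt := hB s hs
          show uj (H ∩ Set.Ico (xq F s) (xq F (s + (M - a)))) < ENNReal.ofReal (tj - b)
          rw [← ENNReal.ofReal_toReal (measure_ne_top uj
            (H ∩ Set.Ico (xq F s) (xq F (s + (M - a))))), hΦ2toReal s]
          exact (ENNReal.ofReal_lt_ofReal_iff (by linarith)).mpr hlt))
      rwa [setLIntegral_const] at this
    have heq : ENNReal.ofReal b * volume (Set.Icc (0:ℝ) (M - a))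
        = ENNReal.ofReal (tj - b) * volume (Set.Icc (0:ℝ) a) := by
      rw [hvol1, hvol2, ← ENNReal.ofReal_mul hb0.le, ← ENNReal.ofReal_mul (by linarith)]
      congr 1
      rw [hadef, hbdef]
      ring
    have : ENNReal.ofReal b * volume (Set.Icc (0:ℝ) (M - a))
        < ENNReal.ofReal b * volume (Set.Icc (0:ℝ) (M - a)) := by
      calc ENNReal.ofReal b * volume (Set.Icc (0:ℝ) (M - a))
          < ∫⁻ s in Set.Icc 0 (M - a),
              uj (H ∩ Set.Ico (xq F s) (xq F (s + a))) ∂volume := hgt1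
        _ = ∫⁻ s in Set.Icc 0 a,
              uj (H ∩ Set.Ico (xq F s) (xq F (s + (M - a)))) ∂volume := hint_eq
        _ < ENNReal.ofReal (tj - b) * volume (Set.Icc (0:ℝ) a) := hlt2
        _ = ENNReal.ofReal b * volume (Set.Icc (0:ℝ) (M - a)) := heq.symm
    exact absurd this (lt_irrefl _)
  · -- all < b and all > tj - b : integral contradiction (other direction)
    exfalso
    have hfub1 := fubini ui uj hui H hHm hHsub a ha0 haM.le
    have hfub2 := fubini ui uj hui H hHm hHsub (M - a) (by linarith) (by linarith)
    have hMMa : M - (M - a) = a := by ring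
    rw [hMMa] at hfub2 hB
    have hptwise : ∀ p ∈ H, volume (Set.Icc 0 (M - a) ∩ Set.Ioc (F p - a) (F p))
        = volume (Set.Icc 0 a ∩ Set.Ioc (F p - (M - a)) (F p)) := by
      intro p _
      rw [vol_inter, vol_inter, min_max_identity]
    have hint_eq : ∫⁻ s in Set.Icc 0 (M - a),
          uj (H ∩ Set.Ico (xq F s) (xq F (s + a))) ∂volume
        = ∫⁻ s in Set.Icc 0 a,
          uj (H ∩ Set.Ico (xq F s) (xq F (s + (M - a)))) ∂volume := by
      rw [hfub1, hfub2]
      exact lintegral_congr_ae ((ae_restrict_iff' hHm).mpr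
        (Filter.Eventually.of_forall hptwise))
    have hvol1 : volume (Set.Icc (0:ℝ) (M - a)) = ENNReal.ofReal (M - a) := by
      rw [Real.volume_Icc, sub_zero]
    have hvol2 : volume (Set.Icc (0:ℝ) a) = ENNReal.ofReal a := by
      rw [Real.volume_Icc, sub_zero]
    have hΦ1toReal : ∀ s : ℝ, (uj (H ∩ Set.Ico (xq F s) (xq F (s + a)))).toReal
        = psi ui uj H a s := fun s => meas_split_real uj H hHm (xq_mono (by linarith))
    have hΦ2toReal : ∀ s : ℝ, (uj (H ∩ Set.Ico (xq F s) (xq F (s + (M - a))))).toReal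
        = psi ui uj H (M - a) s := fun s => meas_split_real uj H hHm (xq_mono (by linarith))
    have hlt1 : ∫⁻ s in Set.Icc 0 (M - a),
          uj (H ∩ Set.Ico (xq F s) (xq F (s + a))) ∂volume
        < ENNReal.ofReal b * volume (Set.Icc (0:ℝ) (M - a)) := by
      have hfin : ∫⁻ s in Set.Icc 0 (M - a),
          uj (H ∩ Set.Ico (xq F s) (xq F (s + a))) ∂volume ≠ ⊤ := by
        refine ne_top_of_le_ne_top ?_ (lintegral_mono (g := fun _ => uj H)
          (fun s => measure_mono Set.inter_subset_left))
        rw [setLIntegral_const, hvol1]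
        exact ENNReal.mul_ne_top (measure_ne_top uj H) ENNReal.ofReal_ne_top
      have := setLIntegral_strict_mono
        (f := fun s => uj (H ∩ Set.Ico (xq F s) (xq F (s + a))))
        (g := fun _ => ENNReal.ofReal b)
        measurableSet_Icc
        (by rw [hvol1]; simp only [ne_eq, ENNReal.ofReal_eq_zero, not_le]; linarith)
        measurable_const
        hfin
        (Filter.Eventually.of_forall (fun s hs => by
          have hlt := hA s hs
          show uj (H ∩ Set.Ico (xq F s) (xq F (s + a))) < ENNReal.ofReal b
          rw [← ENNReal.ofReal_toReal (measure_ne_top uj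
            (H ∩ Set.Ico (xq F s) (xq F (s + a)))), hΦ1toReal s]
          exact (ENNReal.ofReal_lt_ofReal_iff hb0).mpr hlt))
      rwa [setLIntegral_const] at this
    have hgt2 : ENNReal.ofReal (tj - b) * volume (Set.Icc (0:ℝ) a)
        < ∫⁻ s in Set.Icc 0 a, uj (H ∩ Set.Ico (xq F s) (xq F (s + (M - a)))) ∂volume := by
      have := setLIntegral_strict_mono (f := fun _ => ENNReal.ofReal (tj - b))
        (g := fun s => uj (H ∩ Set.Ico (xq F s) (xq F (s + (M - a)))))
        measurableSet_Icc
        (by rw [hvol2]; simp only [ne_eq, ENNReal.ofReal_eq_zero, not_le]; linarith)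
        (Phi_measurable uj H hHm F (by linarith))
        (by rw [setLIntegral_const, hvol2]; exact ENNReal.mul_ne_top ENNReal.ofReal_ne_top ENNReal.ofReal_ne_top)
        (Filter.Eventually.of_forall (fun s hs => by
          have hlt := hB s hs
          show ENNReal.ofReal (tj - b) < uj (H ∩ Set.Ico (xq F s) (xq F (s + (M - a))))
          rw [← ENNReal.ofReal_toReal (measure_ne_top uj
            (H ∩ Set.Ico (xq F s) (xq F (s + (M - a))))), hΦ2toReal s]
          exact (ENNReal.ofReal_lt_ofReal_iff (by linarith)).mpr hlt))
      rwa [setLIntegral_const] at this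
    have heq : ENNReal.ofReal b * volume (Set.Icc (0:ℝ) (M - a))
        = ENNReal.ofReal (tj - b) * volume (Set.Icc (0:ℝ) a) := by
      rw [hvol1, hvol2, ← ENNReal.ofReal_mul hb0.le, ← ENNReal.ofReal_mul (by linarith)]
      congr 1
      rw [hadef, hbdef]
      ring
    have : ENNReal.ofReal b * volume (Set.Icc (0:ℝ) (M - a))
        < ENNReal.ofReal b * volume (Set.Icc (0:ℝ) (M - a)) := by
      calc ENNReal.ofReal b * volume (Set.Icc (0:ℝ) (M - a))
          = ENNReal.ofReal (tj - b) * volume (Set.Icc (0:ℝ) a) := heq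
        _ < ∫⁻ s in Set.Icc 0 a,
              uj (H ∩ Set.Ico (xq F s) (xq F (s + (M - a)))) ∂volume := hgt2
        _ = ∫⁻ s in Set.Icc 0 (M - a),
              uj (H ∩ Set.Ico (xq F s) (xq F (s + a))) ∂volume := hint_eq.symm
        _ < ENNReal.ofReal b * volume (Set.Icc (0:ℝ) (M - a)) := hlt1
    exact absurd this (lt_irrefl _)
  · -- all < b and all < tj - b : direct construction
    set z := xq F (M - a) with hzdef
    have hzM : xq F (M - a) ≤ xq F M := xq_mono (by linarith)
    set C := H ∩ Set.Ico z (xq F M) with hCdef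
    set D := H ∩ Set.Ici z with hDdef
    have hCm : MeasurableSet C := hHm.inter measurableSet_Ico
    have hDm : MeasurableSet D := hHm.inter measurableSet_Ici
    have hCD : C ⊆ D := Set.inter_subset_inter_right _ Set.Ico_subset_Ici_self
    have hDsub : D ⊆ Set.Ico (0:ℝ) 1 := Set.inter_subset_left.trans hHsub
    have hCui : (ui C).toReal = a := by
      rw [hCdef, meas_split_real ui H hHm hzM]
      show F (xq F M) - F z = a
      rw [hFXM, hzdef, hFXMa]; ring
    have hDui : (ui D).toReal = a := by
      rw [hDdef, compl_split ui H hHm z]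
      show M - F z = a
      rw [hzdef, hFXMa]; ring
    have hCuj : (uj C).toReal ≤ b := by
      rw [hCdef, meas_split_real uj H hHm hzM]
      have := hA (M - a) ⟨by linarith, le_rfl⟩
      rw [hpsiaMa] at this
      exact this.le
    have hDuj : b ≤ (uj D).toReal := by
      rw [hDdef, compl_split uj H hHm z]
      have := hB 0 ⟨le_rfl, by linarith⟩
      rw [hpsiMa0] at this
      show b ≤ tj - G z
      rw [hzdef]
      linarith
    obtain ⟨S, hSD, hSm, hSui, hSuj⟩ :=
      fill_in ui uj huj C D hCm hDm hCD hDsub hCuj hDuj (by rw [hCui, hDui])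
    exact ⟨S, hSD.trans Set.inter_subset_left, hSm, by rw [hSui, hCui], hSuj⟩
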